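/- Let n ≥ 3 be an integer, m = n − 1, and suppose 1/(m+1) < ρ < 1/m. Then there is no solution (x, y) of the system (S_ρ) on all of ℝ such that x′(t) < 0 and 0 < x(t) < 1 for every t ∈ ℝ and (x(t), y(t)) → (1, 0) as t → −∞. -/

import Mathlib

open Filter Set Topology

set_option maxHeartbeats 1000000


/-- `IsEinsteinSystemSol m ρ x y` means the pair of differentiable functions `(x, y)` solves
the planar system `(S_ρ)`:
`(1 − 2mρ)·x′ = (m−1)(1−mρ)(1 − x²) − x·y` and
`(1 − 2mρ)·y′ = −m(m−1)(1−(m+1)ρ)(1 − x²) + (1 + m − 4mρ)·x·y`,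
arising from rotationally symmetric gradient steady ρ-Einstein solitons. -/
def IsEinsteinSystemSol (m ρ : ℝ) (x y : ℝ → ℝ) : Prop :=
  Differentiable ℝ x ∧ Differentiable ℝ y ∧
    (∀ t : ℝ, (1 - 2 * m * ρ) * deriv x t =
      (m - 1) * (1 - m * ρ) * (1 - x t ^ 2) - x t * y t) ∧
    (∀ t : ℝ, (1 - 2 * m * ρ) * deriv y t =
      -(m * (m - 1) * (1 - (m + 1) * ρ) * (1 - x t ^ 2)) + (1 + m - 4 * m * ρ) * x t * y t)

/-- Case 6 of Theorem 4.2: for `1/(m+1) < ρ < 1/m` there is no global trajectory of the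
system `(S_ρ)` with `x′ < 0`, `0 < x < 1` emanating from the equilibrium `(1,0)` at `t = -∞`. -/
theorem no_steady_soliton_trajectory_case6 (n : ℕ) (hn : 3 ≤ n) (m ρ : ℝ)
    (hm : m = (n : ℝ) - 1) (hρ1 : 1 / (m + 1) < ρ) (hρ2 : ρ < 1 / m) :
    ¬ ∃ x y : ℝ → ℝ, IsEinsteinSystemSol m ρ x y ∧
      (∀ t : ℝ, deriv x t < 0) ∧ (∀ t : ℝ, 0 < x t ∧ x t < 1) ∧
      Filter.Tendsto (fun t => (x t, y t)) Filter.atBot (nhds (1, 0)) := by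
  rintro ⟨x, y, ⟨hdx, hdy, hex, hey⟩, hx', hx01, hlim⟩
  -- constants
  have hm2 : (2:ℝ) ≤ m := by
    have : (3:ℝ) ≤ (n:ℝ) := by exact_mod_cast hn
    linarith
  have hm0 : (0:ℝ) < m := by linarith
  have hm10 : (0:ℝ) < m + 1 := by linarith
  have hmρ : m * ρ < 1 := by rw [lt_div_iff₀ hm0] at hρ2; linarith
  have h1mρ : 1 < (m + 1) * ρ := by rw [div_lt_iff₀ hm10] at hρ1; linarith
  have hρpos : 0 < ρ := by nlinarith
  have hD : 1 - 2 * m * ρ < 0 := by nlinarith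
  set D : ℝ := 1 - 2 * m * ρ with hDdef
  set A : ℝ := (m - 1) * (1 - m * ρ) with hAdef
  set Bp : ℝ := m * (m - 1) * ((m + 1) * ρ - 1) with hBdef
  set C : ℝ := 1 + m - 4 * m * ρ with hCdef
  clear_value D A Bp C
  have hA : 0 < A := by rw [hAdef]; apply mul_pos <;> linarith
  have hBp : 0 < Bp := by
    rw [hBdef]; apply mul_pos; apply mul_pos <;> linarith
    linarith
  have hId : Bp + C * A = (m - 1) * D ^ 2 := by rw [hAdef, hBdef, hCdef, hDdef]; ring
  -- rewritten equations
  have hex' : ∀ t, D * deriv x t = A * (1 - x t ^ 2) - x t * y t := fun t => hex t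
  have hey' : ∀ t, D * deriv y t = Bp * (1 - x t ^ 2) + C * (x t * y t) := fun t => by
    rw [hBdef]; linear_combination hey t
  -- x y < A (1 - x²)
  have hxy : ∀ t, x t * y t < A * (1 - x t ^ 2) := by
    intro t
    have h1 : 0 < D * deriv x t := mul_pos_of_neg_of_neg hD (hx' t)
    linarith [hex' t]
  -- key: y ≥ 0 → y' < 0
  have hyd : ∀ t, 0 ≤ y t → deriv y t < 0 := by
    intro t ht
    have hx0 := (hx01 t).1
    have hx1 := (hx01 t).2
    have hu : 0 < 1 - x t ^ 2 := by nlinarith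
    have hp : 0 ≤ x t * y t := mul_nonneg hx0.le ht
    have hpos : 0 < D * deriv y t := by
      rw [hey' t]
      rcases le_or_gt 0 C with hC | hC
      · have h1 := mul_pos hBp hu
        have h2 := mul_nonneg hC hp
        linarith
      · have h2 : C * (A * (1 - x t ^ 2)) < C * (x t * y t) :=
          mul_lt_mul_of_neg_left (hxy t) hC
        have hD2 : 0 < D ^ 2 := by
          have : D ≠ 0 := ne_of_lt hD
          positivity
        have h3 : (0:ℝ) < (m - 1) * D ^ 2 * (1 - x t ^ 2) :=
          mul_pos (mul_pos (by linarith) hD2) hu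
        have h4 : Bp * (1 - x t ^ 2) + C * (A * (1 - x t ^ 2))
            = (m - 1) * D ^ 2 * (1 - x t ^ 2) := by rw [← hId]; ring
        linarith
    by_contra h
    push_neg at h
    have hnp : D * deriv y t ≤ 0 := mul_nonpos_iff.mpr (Or.inr ⟨hD.le, h⟩)
    linarith
  -- Step 3: y t₀ ≤ 0 for some t₀
  have hy0 : Tendsto y atBot (𝓝 0) :=
    (continuous_snd.tendsto ((1:ℝ), (0:ℝ))).comp hlim
  obtain ⟨t₀, ht₀⟩ : ∃ t₀, y t₀ ≤ 0 := by
    by_contra h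
    push_neg at h
    have hanti : StrictAnti y := strictAnti_of_deriv_neg fun t => hyd t (h t).le
    have hev : ∀ᶠ t in atBot, y (-1) ≤ y t :=
      eventually_atBot.2 ⟨-2, fun t ht => (hanti (by linarith : t < -1)).le⟩
    have := ge_of_tendsto hy0 hev
    linarith [h (-1)]
  -- Step 4: y stays ≤ 0 after t₀
  have hyneg : ∀ t, t₀ ≤ t → y t ≤ 0 := by
    intro t₁ ht₁
    by_contra hpos1
    push_neg at hpos1
    set S : Set ℝ := Icc t₀ t₁ ∩ {t | y t ≤ 0} with hSdef
    have hSne : S.Nonempty := ⟨t₀, ⟨le_refl t₀, ht₁⟩, ht₀⟩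
    have hSbdd : BddAbove S := ⟨t₁, fun t ht => ht.1.2⟩
    have hScl : IsClosed S := isClosed_Icc.inter (isClosed_le hdy.continuous continuous_const)
    set s := sSup S with hsdef
    have hsS : s ∈ S := hScl.csSup_mem hSne hSbdd
    have hys_le : y s ≤ 0 := hsS.2
    have hst₁ : s < t₁ := lt_of_le_of_ne hsS.1.2 (fun he => by rw [he] at hys_le; linarith)
    have hmid : ∀ t, s < t → t ≤ t₁ → 0 < y t := by
      intro t hst htt₁
      by_contra hy
      push_neg at hy
      have hmem : t ∈ S := ⟨⟨le_trans hsS.1.1 hst.le, htt₁⟩, hy⟩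
      exact absurd (le_csSup hSbdd hmem) (not_le.2 hst)
    have hIoo : Ioo s t₁ ∈ 𝓝[>] s := Ioo_mem_nhdsGT_of_mem ⟨le_refl s, hst₁⟩
    have hys_ge : 0 ≤ y s := by
      have htd : Tendsto y (𝓝[>] s) (𝓝 (y s)) :=
        (hdy.continuous.continuousAt).continuousWithinAt
      refine ge_of_tendsto htd ?_
      filter_upwards [hIoo] with t ht
      exact (hmid t ht.1 ht.2.le).le
    have hys : y s = 0 := le_antisymm hys_le hys_ge
    have hds : deriv y s < 0 := hyd s hys_ge
    have hslope : Tendsto (slope y s) (𝓝[≠] s) (𝓝 (deriv y s)) :=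
      hasDerivAt_iff_tendsto_slope.mp (hdy s).hasDerivAt
    have hlt : ∀ᶠ t in 𝓝[≠] s, slope y s t < 0 := hslope.eventually_lt_const hds
    have hsub : 𝓝[>] s ≤ 𝓝[≠] s :=
      nhdsWithin_mono s fun t ht => Set.mem_compl_singleton_iff.mpr (ne_of_gt ht)
    obtain ⟨t, hts, htIoo⟩ :=
      ((hlt.filter_mono hsub).and (Filter.eventually_of_mem hIoo fun t ht => ht)).exists
    rw [slope_def_field, hys, sub_zero] at hts
    have hypos := hmid t htIoo.1 htIoo.2.le
    have h1 : 0 < t - s := by linarith [htIoo.1]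
    have := div_nonneg hypos.le h1.le
    linarith
  -- Step 5: linear decay of x after t₀
  have hxanti : StrictAnti x := strictAnti_of_deriv_neg hx'
  obtain ⟨hx0t₀, hx1t₀⟩ := hx01 t₀
  have hδ : 0 < 1 - x t₀ ^ 2 := by nlinarith
  set δ := 1 - x t₀ ^ 2 with hδdef
  clear_value δ
  have hdb : ∀ t, t₀ ≤ t → A * δ ≤ D * deriv x t := by
    intro t ht
    have hxle : x t ≤ x t₀ := hxanti.antitone ht
    have hx0 := (hx01 t).1
    have h1 : δ ≤ 1 - x t ^ 2 := by rw [hδdef]; nlinarith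
    have h2 : 0 ≤ -(x t * y t) := by
      have := hyneg t ht
      nlinarith
    have h3 := hex' t
    have h4 : A * δ ≤ A * (1 - x t ^ 2) := mul_le_mul_of_nonneg_left h1 hA.le
    linarith
  have hφex : ∃ φ : ℝ → ℝ, φ = fun t => D * x t - A * δ * t := ⟨_, rfl⟩
  obtain ⟨φ, hφdef⟩ := hφex
  have hφd : ∀ t, HasDerivAt φ (D * deriv x t - A * δ) t := by
    intro t
    have h1 : HasDerivAt (fun t => D * x t) (D * deriv x t) t := ((hdx t).hasDerivAt).const_mul D
    have h2 : HasDerivAt (fun t => A * δ * t) (A * δ) t := by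
      simpa using (hasDerivAt_id t).const_mul (A * δ)
    rw [hφdef]
    exact h1.sub h2
  have hφmono : MonotoneOn φ (Ici t₀) := by
    apply monotoneOn_of_deriv_nonneg (convex_Ici t₀)
    · exact (Differentiable.continuous fun t => (hφd t).differentiableAt).continuousOn
    · exact fun t _ => ((hφd t).differentiableAt).differentiableWithinAt
    · intro t ht
      rw [interior_Ici] at ht
      rw [(hφd t).deriv]
      have := hdb t (le_of_lt ht)
      linarith
  have hAδ : 0 < A * δ := mul_pos hA hδ
  set T := t₀ + (-D) / (A * δ) + 1 with hTdef
  have hT : t₀ ≤ T := by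
    have : 0 ≤ (-D) / (A * δ) := div_nonneg (by linarith) hAδ.le
    rw [hTdef]; linarith
  have h5 : D * x t₀ - A * δ * t₀ ≤ D * x T - A * δ * T := by
    have h := hφmono self_mem_Ici hT hT
    rw [hφdef] at h
    simpa using h
  obtain ⟨hxT0, hxT1⟩ := hx01 T
  have hDxT : D * x T < 0 := mul_neg_of_neg_of_pos hD hxT0
  have hDxt₀ : D < D * x t₀ := by nlinarith
  have h9 : A * δ * (T - t₀) = -D + A * δ := by
    rw [hTdef]
    field_simp
    ring
  nlinarith
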